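/- Two vertex solutions u and w of a polytope P_{i-1} = O ∩ J ∩ H₁ ∩ ... ∩ H_{i-1} are adjacent (joined by an edge of P_{i-1}) if and only if the dimension of the intersection of H₁ ∩ ... ∩ H_{i-1} with the coordinate subspace {x ∈ R^t : x_k = 0 for all k ∈ Z(u) ∩ Z(w)} is two; equivalently, t - rank(M) = 2 where M is the matrix stacking the rows m₁,...,m_{i-1} and the standard basis rows e_k for k ∈ Z(u) ∩ Z(w). -/

import Mathlib

open Matrix

/-- The matrix stacking the rows `m₁, …, m_{i-1}` (given by `rows`) and the
standard basis rows `e_k` for `k ∈ Z(u) ∩ Z(w)`. -/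
noncomputable def adjacencyTestMatrix {s t : ℕ} (rows : Fin s → (Fin t → ℝ))
    (u w : Fin t → ℝ) :
    Matrix (Fin s ⊕ {k : Fin t // u k = 0 ∧ w k = 0}) (Fin t) ℝ :=
  Matrix.of fun r c =>
    match r with
    | Sum.inl a => rows a c
    | Sum.inr k => if c = k.1 then 1 else 0

lemma aux_coef_nonneg {t : ℕ} {P : Set (Fin t → ℝ)} {u w : Fin t → ℝ}
    (hu : u ∈ Set.extremePoints ℝ P) (hwP : w ∈ P) (huw : u ≠ w)
    {a b : ℝ} (hab : a + b = 1) (hx : a • u + b • w ∈ P) : 0 ≤ b := by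
  by_contra hb
  push_neg at hb
  have ha : (0:ℝ) < a := by linarith
  have hmem : u ∈ openSegment ℝ (a • u + b • w) w := by
    refine ⟨1/a, -b/a, by positivity, div_pos (by linarith) ha, ?_, ?_⟩
    · field_simp; linarith
    · match_scalars <;> field_simp <;> ring
  obtain ⟨-, hext⟩ := hu
  rw [openSegment_symm] at hmem
  exact huw (hext hwP hx hmem).symm

/-- Fukuda–Prodon adjacency criterion: two distinct vertex
solutions `u`, `w` of the polytope
`P = O ∩ J ∩ H₁ ∩ ⋯ ∩ H_{i-1}` are adjacent (the segment `[u, w]` is an extreme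
subset, i.e. an edge, of `P`) iff the intersection of `H₁ ∩ ⋯ ∩ H_{i-1}` with the
coordinate subspace `{x : x_k = 0 for all k ∈ Z(u) ∩ Z(w)}` — the kernel of the
stacked matrix `M` — has dimension two; equivalently `t - rank(M) = 2`. -/
theorem fukuda_prodon_adjacency
    (s t : ℕ) (rows : Fin s → (Fin t → ℝ))
    (P : Set (Fin t → ℝ))
    (hP : P = {x | (∀ j, 0 ≤ x j) ∧ (∑ j, x j) = 1 ∧ ∀ r, rows r ⬝ᵥ x = 0})
    (u w : Fin t → ℝ)
    (hu : u ∈ Set.extremePoints ℝ P) (hw : w ∈ Set.extremePoints ℝ P)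
    (huw : u ≠ w) :
    (IsExtreme ℝ P (segment ℝ u w) ↔
      Module.finrank ℝ
        (LinearMap.ker (adjacencyTestMatrix rows u w).mulVecLin) = 2) ∧
    (Module.finrank ℝ
        (LinearMap.ker (adjacencyTestMatrix rows u w).mulVecLin) = 2 ↔
      t = (adjacencyTestMatrix rows u w).rank + 2) := by
  have huP := hu.1
  have hwP := hw.1
  subst hP
  obtain ⟨hu0, hu1, huH⟩ := huP
  obtain ⟨hw0, hw1, hwH⟩ := hwP
  set K := LinearMap.ker (adjacencyTestMatrix rows u w).mulVecLin with hKdef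
  -- kernel membership characterization
  have hKiff : ∀ v : Fin t → ℝ, v ∈ K ↔
      ((∀ r, rows r ⬝ᵥ v = 0) ∧ ∀ k, u k = 0 → w k = 0 → v k = 0) := by
    intro v
    rw [hKdef, LinearMap.mem_ker, Matrix.mulVecLin_apply]
    constructor
    · intro h
      refine ⟨fun r => ?_, fun k hk1 hk2 => ?_⟩
      · have := congrFun h (Sum.inl r)
        simpa [Matrix.mulVec, adjacencyTestMatrix, dotProduct] using this
      · have := congrFun h (Sum.inr ⟨k, hk1, hk2⟩)
        simpa [Matrix.mulVec, adjacencyTestMatrix, dotProduct, ite_mul] using this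
    · rintro ⟨h1, h2⟩
      funext r
      cases r with
      | inl r => simpa [Matrix.mulVec, adjacencyTestMatrix, dotProduct] using h1 r
      | inr k =>
        have := h2 k.1 k.2.1 k.2.2
        simpa [Matrix.mulVec, adjacencyTestMatrix, dotProduct, ite_mul] using this
  have huK : u ∈ K := (hKiff u).2 ⟨huH, fun k h _ => h⟩
  have hwK : w ∈ K := (hKiff w).2 ⟨hwH, fun k _ h => h⟩
  have hspan_le : Submodule.span ℝ ({u, w} : Set (Fin t → ℝ)) ≤ K := by
    rw [Submodule.span_le]
    rintro x (rfl | rfl)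
    · exact huK
    · exact hwK
  -- sum of linear combinations
  have hsumlin : ∀ (a b : ℝ) (x y : Fin t → ℝ),
      (∑ j, (a • x + b • y) j) = a * (∑ j, x j) + b * (∑ j, y j) := by
    intro a b x y
    simp [Finset.sum_add_distrib, Finset.mul_sum]
  -- linear independence of u, w
  have hind : LinearIndependent ℝ ![u, w] := by
    rw [LinearIndependent.pair_iff]
    intro a b hab
    have hsum : a + b = 0 := by
      have := congrArg (fun x : Fin t → ℝ => ∑ j, x j) hab
      simp only [hsumlin a b u w, hu1, hw1, mul_one] at this
      simpa using this
    have hb : b = -a := by linarith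
    subst hb
    have h0 : a • (u - w) = 0 := by
      rw [smul_sub]; rw [neg_smul] at hab; abel_nf; abel_nf at hab; exact hab
    rcases smul_eq_zero.1 h0 with h | h
    · exact ⟨h, by simp [h]⟩
    · exact absurd (sub_eq_zero.1 h) huw
  have hspanrank : Module.finrank ℝ (Submodule.span ℝ ({u, w} : Set (Fin t → ℝ))) = 2 := by
    have h := finrank_span_eq_card hind
    have hr : Set.range ![u, w] = ({u, w} : Set (Fin t → ℝ)) := by
      ext x
      simp [Matrix.range_cons, Matrix.range_empty]
      tauto
    rw [hr] at h
    simpa using h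
  -- segment is contained in P
  have hseg_sub : segment ℝ u w ⊆
      {x : Fin t → ℝ | (∀ j, 0 ≤ x j) ∧ (∑ j, x j) = 1 ∧ ∀ r, rows r ⬝ᵥ x = 0} := by
    rintro z ⟨a, b, ha, hb, hab, rfl⟩
    refine ⟨fun j => ?_, ?_, fun r => ?_⟩
    · have := hu0 j; have := hw0 j
      simp only [Pi.add_apply, Pi.smul_apply, smul_eq_mul]
      nlinarith
    · rw [hsumlin, hu1, hw1]; linarith
    · simp [dotProduct_add, dotProduct_smul, huH r, hwH r]
  -- coefficients of points of P on the line through u and w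
  have hcoef : ∀ a b : ℝ, a + b = 1 →
      (a • u + b • w) ∈ {x : Fin t → ℝ | (∀ j, 0 ≤ x j) ∧ (∑ j, x j) = 1 ∧ ∀ r, rows r ⬝ᵥ x = 0} →
      0 ≤ a ∧ 0 ≤ b := by
    intro a b hab hx
    refine ⟨?_, aux_coef_nonneg hu ⟨hw0, hw1, hwH⟩ huw hab hx⟩
    have hx' : b • w + a • u ∈
        {x : Fin t → ℝ | (∀ j, 0 ≤ x j) ∧ (∑ j, x j) = 1 ∧ ∀ r, rows r ⬝ᵥ x = 0} := by
      rwa [add_comm]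
    exact aux_coef_nonneg hw ⟨hu0, hu1, huH⟩ huw.symm (by linarith) hx'
  -- the key geometric equivalence
  have key : IsExtreme ℝ
      {x : Fin t → ℝ | (∀ j, 0 ≤ x j) ∧ (∑ j, x j) = 1 ∧ ∀ r, rows r ⬝ᵥ x = 0}
      (segment ℝ u w) ↔ K = Submodule.span ℝ ({u, w} : Set (Fin t → ℝ)) := by
    constructor
    · intro hext
      refine le_antisymm ?_ hspan_le
      intro v hv
      obtain ⟨hvH, hvZ⟩ := (hKiff v).1 hv
      set z : Fin t → ℝ := (1/2 : ℝ) • u + (1/2 : ℝ) • w with hzdef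
      have hz0 : ∀ j, 0 ≤ z j := by
        intro j; have := hu0 j; have := hw0 j
        simp only [hzdef, Pi.add_apply, Pi.smul_apply, smul_eq_mul]; linarith
      have hz1 : (∑ j, z j) = 1 := by rw [hzdef, hsumlin, hu1, hw1]; norm_num
      have hzH : ∀ r, rows r ⬝ᵥ z = 0 := by
        intro r; simp [hzdef, dotProduct_add, dotProduct_smul, huH r, hwH r]
      have hzP : z ∈ {x : Fin t → ℝ | (∀ j, 0 ≤ x j) ∧ (∑ j, x j) = 1 ∧ ∀ r, rows r ⬝ᵥ x = 0} :=
        ⟨hz0, hz1, hzH⟩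
      have hzseg : z ∈ segment ℝ u w := ⟨1/2, 1/2, by norm_num, by norm_num, by norm_num, rfl⟩
      have hzspan : z ∈ Submodule.span ℝ ({u, w} : Set (Fin t → ℝ)) :=
        Submodule.mem_span_pair.2 ⟨1/2, 1/2, rfl⟩
      set σ : ℝ := ∑ j, v j with hσdef
      set v' : Fin t → ℝ := v - σ • z with hv'def
      have hv'span_imp : v' ∈ Submodule.span ℝ ({u, w} : Set (Fin t → ℝ)) →
          v ∈ Submodule.span ℝ ({u, w} : Set (Fin t → ℝ)) := by
        intro h
        have : v = v' + σ • z := by rw [hv'def]; abel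
        rw [this]
        exact Submodule.add_mem _ h (Submodule.smul_mem _ _ hzspan)
      apply hv'span_imp
      have hv'z : ∀ k, z k = 0 → v' k = 0 := by
        intro k hk
        have hu' : u k = 0 ∧ w k = 0 := by
          have h1 := hu0 k; have h2 := hw0 k
          have : (1/2 : ℝ) * u k + (1/2 : ℝ) * w k = 0 := by
            simpa [hzdef, Pi.add_apply, Pi.smul_apply, smul_eq_mul] using hk
          constructor <;> linarith
        have hvk : v k = 0 := hvZ k hu'.1 hu'.2
        simp [hv'def, hvk, hk]
      have hne : Nonempty (Fin t) := by
        by_contra h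
        rw [not_nonempty_iff] at h
        rw [Finset.univ_eq_empty, Finset.sum_empty] at hu1
        norm_num at hu1
      obtain ⟨ε, hε, hεle⟩ : ∃ ε : ℝ, 0 < ε ∧ ∀ k, ε * |v' k| ≤ z k := by
        refine ⟨Finset.univ.inf' Finset.univ_nonempty
          (fun k => if v' k = 0 then 1 else z k / |v' k|), ?_, ?_⟩
        · rw [Finset.lt_inf'_iff]
          intro k _
          by_cases h : v' k = 0
          · simp [h]
          · rw [if_neg h]
            apply div_pos
            · rcases lt_or_eq_of_le (hz0 k) with h' | h'
              · exact h'
              · exact absurd (hv'z k h'.symm) h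
            · exact abs_pos.2 h
        · intro k
          have hle := Finset.inf'_le
            (fun k => if v' k = 0 then 1 else z k / |v' k|) (Finset.mem_univ k)
          by_cases h : v' k = 0
          · simp [h]; exact hz0 k
          · rw [if_neg h] at hle
            exact (le_div_iff₀ (abs_pos.2 h)).1 hle
      have hbound : ∀ j, |ε * v' j| ≤ z j := by
        intro j
        rw [abs_mul, abs_of_pos hε]
        exact hεle j
      have hv'H : ∀ r, rows r ⬝ᵥ v' = 0 := by
        intro r
        simp [hv'def, dotProduct_sub, dotProduct_smul, hvH r, hzH r]
      have hv'1 : (∑ j, v' j) = 0 := by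
        simp only [hv'def, Pi.sub_apply, Pi.smul_apply, smul_eq_mul,
          Finset.sum_sub_distrib, ← Finset.mul_sum, hz1, mul_one, hσdef]
        ring
      have hx₁P : z + ε • v' ∈
          {x : Fin t → ℝ | (∀ j, 0 ≤ x j) ∧ (∑ j, x j) = 1 ∧ ∀ r, rows r ⬝ᵥ x = 0} := by
        refine ⟨fun j => ?_, ?_, fun r => ?_⟩
        · have := abs_le.1 (hbound j)
          simp only [Pi.add_apply, Pi.smul_apply, smul_eq_mul]
          linarith [this.1]
        · simp only [Pi.add_apply, Pi.smul_apply, smul_eq_mul, Finset.sum_add_distrib,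
            ← Finset.mul_sum, hz1, hv'1, mul_zero, add_zero]
        · simp [dotProduct_add, dotProduct_smul, hzH r, hv'H r]
      have hx₂P : z - ε • v' ∈
          {x : Fin t → ℝ | (∀ j, 0 ≤ x j) ∧ (∑ j, x j) = 1 ∧ ∀ r, rows r ⬝ᵥ x = 0} := by
        refine ⟨fun j => ?_, ?_, fun r => ?_⟩
        · have := abs_le.1 (hbound j)
          simp only [Pi.sub_apply, Pi.smul_apply, smul_eq_mul]
          linarith [this.2]
        · simp only [Pi.sub_apply, Pi.smul_apply, smul_eq_mul, Finset.sum_sub_distrib,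
            ← Finset.mul_sum, hz1, hv'1, mul_zero, sub_zero]
        · simp [dotProduct_sub, dotProduct_smul, hzH r, hv'H r]
      have hzopen : z ∈ openSegment ℝ (z + ε • v') (z - ε • v') :=
        ⟨1/2, 1/2, by norm_num, by norm_num, by norm_num, by module⟩
      have hseg₁ := (hext.2 hx₁P hx₂P hzseg hzopen)
      obtain ⟨a, b, -, -, -, heq⟩ := hseg₁
      have hx₁span : z + ε • v' ∈ Submodule.span ℝ ({u, w} : Set (Fin t → ℝ)) := by
        rw [← heq]
        exact Submodule.add_mem _ (Submodule.smul_mem _ _ (Submodule.subset_span (by simp)))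
          (Submodule.smul_mem _ _ (Submodule.subset_span (by simp)))
      have hεv' : ε • v' ∈ Submodule.span ℝ ({u, w} : Set (Fin t → ℝ)) := by
        have : ε • v' = (z + ε • v') - z := by abel
        rw [this]
        exact Submodule.sub_mem _ hx₁span hzspan
      have : v' = ε⁻¹ • (ε • v') := by
        rw [smul_smul, inv_mul_cancel₀ (ne_of_gt hε), one_smul]
      rw [this]
      exact Submodule.smul_mem _ _ hεv'
    · intro hKspan
      refine ⟨hseg_sub, ?_⟩
      intro x₁ h₁ x₂ h₂ z hzseg hzopen
      obtain ⟨a, b, ha, hb, hab, hzab⟩ := hzseg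
      obtain ⟨p, q, hp, hq, hpq, hzpq⟩ := hzopen
      have hZ : ∀ k, u k = 0 → w k = 0 → x₁ k = 0 ∧ x₂ k = 0 := by
        intro k hk1 hk2
        have hz0 : z k = 0 := by
          rw [← hzab]; simp [hk1, hk2]
        have hpq0 : p * x₁ k + q * x₂ k = 0 := by
          have := congrFun hzpq k
          simpa [Pi.add_apply, Pi.smul_apply, smul_eq_mul, hz0] using this
        have h1 := h₁.1 k
        have h2 := h₂.1 k
        constructor <;> nlinarith
      have hx₁K : x₁ ∈ K := (hKiff x₁).2 ⟨h₁.2.2, fun k hk1 hk2 => (hZ k hk1 hk2).1⟩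
      have hx₂K : x₂ ∈ K := (hKiff x₂).2 ⟨h₂.2.2, fun k hk1 hk2 => (hZ k hk1 hk2).2⟩
      rw [hKspan] at hx₁K hx₂K
      obtain ⟨α, β, hx₁eq⟩ := Submodule.mem_span_pair.1 hx₁K
      obtain ⟨γ, δ, hx₂eq⟩ := Submodule.mem_span_pair.1 hx₂K
      have hαβ : α + β = 1 := by
        have := congrArg (fun x : Fin t → ℝ => ∑ j, x j) hx₁eq
        simp only [hsumlin, hu1, hw1, mul_one, h₁.2.1] at this
        exact this
      have hγδ : γ + δ = 1 := by
        have := congrArg (fun x : Fin t → ℝ => ∑ j, x j) hx₂eq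
        simp only [hsumlin, hu1, hw1, mul_one, h₂.2.1] at this
        exact this
      have hc₁ := hcoef α β hαβ (hx₁eq ▸ h₁)
      have hc₂ := hcoef γ δ hγδ (hx₂eq ▸ h₂)
      exact ⟨α, β, hc₁.1, hc₁.2, hαβ, hx₁eq⟩
  -- rank-nullity
  have hrk : (adjacencyTestMatrix rows u w).rank + Module.finrank ℝ K = t := by
    have h := LinearMap.finrank_range_add_finrank_ker (adjacencyTestMatrix rows u w).mulVecLin
    rw [Module.finrank_pi] at h
    simpa [Matrix.rank, hKdef] using h
  have dim_iff : Module.finrank ℝ K = 2 ↔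
      K = Submodule.span ℝ ({u, w} : Set (Fin t → ℝ)) := by
    constructor
    · intro h
      exact (Submodule.eq_of_le_of_finrank_eq hspan_le (by rw [hspanrank, h])).symm
    · intro h
      rw [h, hspanrank]
  exact ⟨key.trans dim_iff.symm, by constructor <;> (intro h; omega)⟩
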